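/- Let G be a weighted undirected graph, T ⊆ V, F = V \ T with L_FF invertible. For u ∈ F and v ∈ T, the entry (P·1_u)(v) of the projection matrix P = [−L_TF·L_FF^{-1}, I_T] applied to the indicator of u equals the probability that the weighted random walk started at u first hits T at the vertex v. In particular, the entries {(P·1_u)(v)}_{v∈T} are nonnegative and sum to 1. -/

import Mathlib

open Matrix BigOperators Filter Topology Finset

section helpers
lemma matpow_entry_nonneg {F : Type*} [Fintype F] [DecidableEq F]
    (Q : Matrix F F ℝ) (hnn : ∀ a b, 0 ≤ Q a b) (n : ℕ) (a b : F) :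
    0 ≤ (Q ^ n) a b := by
  induction n generalizing a b with
  | zero => simp [Matrix.one_apply]; positivity
  | succ n ih =>
    rw [pow_succ, Matrix.mul_apply]
    exact Finset.sum_nonneg fun c _ => mul_nonneg (ih a c) (hnn c b)

lemma pow_entries_tendsto_zero {F : Type*} [Fintype F] [DecidableEq F]
    (Q : Matrix F F ℝ) (hnn : ∀ a b, 0 ≤ Q a b) (hrow : ∀ a, ∑ b, Q a b ≤ 1)
    (hinv : IsUnit (1 - Q).det) (a b : F) :
    Tendsto (fun n => (Q ^ n) a b) atTop (𝓝 0) := by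
  have hQn : ∀ n (a b : F), 0 ≤ (Q ^ n) a b := by
    intro n
    induction n with
    | zero => intro a b; simp [Matrix.one_apply]; positivity
    | succ n ih =>
      intro a b
      rw [pow_succ, Matrix.mul_apply]
      exact Finset.sum_nonneg fun c _ => mul_nonneg (ih a c) (hnn c b)
  set s : ℕ → F → ℝ := fun n a => ∑ b, (Q ^ n) a b with hs
  have hs0 : ∀ a, s 0 a = 1 := by intro a; simp [hs, Matrix.one_apply]
  have hsnn : ∀ n a, 0 ≤ s n a := fun n a => Finset.sum_nonneg fun c _ => hQn n a c
  have hrec : ∀ n a, s (n + 1) a = ∑ c, Q a c * s n c := by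
    intro n a
    simp only [hs, pow_succ', Matrix.mul_apply]
    rw [Finset.sum_comm]
    simp [Finset.mul_sum]
  have hanti : ∀ a, Antitone fun n => s n a := by
    intro a
    apply antitone_nat_of_succ_le
    intro n
    have : s (n + 1) a = ∑ c, (Q ^ n) a c * (∑ b, Q c b) := by
      simp only [hs, pow_succ, Matrix.mul_apply]
      rw [Finset.sum_comm]
      simp [Finset.mul_sum]
    rw [this]
    calc ∑ c, (Q ^ n) a c * (∑ b, Q c b) ≤ ∑ c, (Q ^ n) a c * 1 :=
          Finset.sum_le_sum fun c _ => mul_le_mul_of_nonneg_left (hrow c) (hQn n a c)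
      _ = s n a := by simp [hs]
  set L : F → ℝ := fun a => ⨅ n, s n a with hL
  have htend : ∀ a, Tendsto (fun n => s n a) atTop (𝓝 (L a)) := by
    intro a
    exact tendsto_atTop_ciInf (hanti a) ⟨0, by rintro x ⟨n, rfl⟩; exact hsnn n a⟩
  have hfix : ∀ a, L a = ∑ c, Q a c * L c := by
    intro a
    have h1 : Tendsto (fun n => s (n + 1) a) atTop (𝓝 (L a)) :=
      (htend a).comp (tendsto_add_atTop_nat 1)
    have h2 : Tendsto (fun n => ∑ c, Q a c * s n c) atTop (𝓝 (∑ c, Q a c * L c)) :=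
      tendsto_finset_sum _ fun c _ => (htend c).const_mul _
    simp only [hrec] at h1
    exact tendsto_nhds_unique h1 h2
  have hker : (1 - Q) *ᵥ L = 0 := by
    funext a
    simp only [Matrix.mulVec, dotProduct, Matrix.sub_apply, Matrix.one_apply, sub_mul,
      Finset.sum_sub_distrib, ite_mul, one_mul, zero_mul, Pi.zero_apply]
    rw [Finset.sum_ite_eq _ a L]
    simp [← hfix a]
  have hL0 : L = 0 := by
    have := congrArg (fun v => (1 - Q)⁻¹ *ᵥ v) hker
    have h2 := this
    simp [Matrix.mulVec_mulVec, Matrix.nonsing_inv_mul _ hinv] at h2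
    exact h2
  have hub : ∀ n, (Q ^ n) a b ≤ s n a := by
    intro n
    exact Finset.single_le_sum (fun c _ => hQn n a c) (Finset.mem_univ b)
  have : Tendsto (fun n => s n a) atTop (𝓝 0) := by
    have := htend a
    rwa [show L a = 0 from by rw [hL0]; rfl] at this
  exact squeeze_zero (fun n => hQn n a b) hub this


end helpers

/-- The Laplacian matrix of a weighted graph given by a weight function `w`. -/
def lap {V : Type*} [Fintype V] [DecidableEq V] (w : V → V → ℝ) : Matrix V V ℝ :=
  Matrix.diagonal (fun i => ∑ k, w i k) - Matrix.of w

/-- the entries of the projection matrix applied to `1_u` are the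
probabilities that the weighted random walk from `u` first hits `T` at each vertex,
expressed as the sum over walk lengths of the stay-in-`F`-then-exit probabilities;
in particular they are nonnegative and sum to `1`. -/
theorem projection_is_hitting_probability
    {F T : Type*} [Fintype F] [Fintype T] [DecidableEq F] [DecidableEq T]
    [Nonempty T]
    (w : F ⊕ T → F ⊕ T → ℝ)
    (hsymm : ∀ a b, w a b = w b a) (hnonneg : ∀ a b, 0 ≤ w a b)
    (hdeg : ∀ x : F ⊕ T, 0 < ∑ y, w x y)
    (hreach : ∀ x : F, ∃ t : T,
      Relation.ReflTransGen (fun a b => w a b ≠ 0) (Sum.inl x) (Sum.inr t))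
    (hFF : IsUnit ((lap w).toBlocks₁₁).det)
    (u : F) :
    -- `Q` : one-step transition probabilities inside `F`;  `R` : from `F` into `T`
    (∀ v : T,
      ((Matrix.fromCols (-((lap w).toBlocks₂₁ * ((lap w).toBlocks₁₁)⁻¹)) 1)
          *ᵥ (Pi.single (Sum.inl u) 1 : F ⊕ T → ℝ)) v
        = ∑' ℓ : ℕ,
            (((Matrix.of fun a b : F => w (Sum.inl a) (Sum.inl b) / ∑ y, w (Sum.inl a) y) ^ ℓ)
              * (Matrix.of fun (a : F) (t : T) => w (Sum.inl a) (Sum.inr t) / ∑ y, w (Sum.inl a) y))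
              u v) ∧
    (∀ v : T,
      0 ≤ ((Matrix.fromCols (-((lap w).toBlocks₂₁ * ((lap w).toBlocks₁₁)⁻¹)) 1)
          *ᵥ (Pi.single (Sum.inl u) 1 : F ⊕ T → ℝ)) v) ∧
    (∑ v : T,
      ((Matrix.fromCols (-((lap w).toBlocks₂₁ * ((lap w).toBlocks₁₁)⁻¹)) 1)
          *ᵥ (Pi.single (Sum.inl u) 1 : F ⊕ T → ℝ)) v) = 1 := by
  classical
  set d : F → ℝ := fun a => ∑ y, w (Sum.inl a) y with hd_def
  have hd : ∀ a : F, 0 < d a := fun a => hdeg _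
  have hdne : ∀ a : F, d a ≠ 0 := fun a => (hd a).ne'
  set lapw : Matrix (F ⊕ T) (F ⊕ T) ℝ := Matrix.diagonal (fun i => ∑ k, w i k) - Matrix.of w with hlapw
  have hlapw_lap : lap w = lapw := rfl
  set Lff : Matrix F F ℝ := lapw.toBlocks₁₁ with hLff_def
  have hFF' : IsUnit Lff.det := hFF
  set Q : Matrix F F ℝ := Matrix.of fun a b : F => w (Sum.inl a) (Sum.inl b) / d a with hQ_def
  set R : Matrix F T ℝ := Matrix.of fun (a : F) (t : T) => w (Sum.inl a) (Sum.inr t) / d a with hR_def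
  have hLff : Lff = Matrix.diagonal d - Matrix.of (fun a b : F => w (Sum.inl a) (Sum.inl b)) := by
    ext a b
    simp only [hLff_def, hlapw, Matrix.toBlocks₁₁, Matrix.of_apply, Matrix.sub_apply,
      Matrix.diagonal_apply, Sum.inl.injEq]
    rfl
  have hdsplit : ∀ a : F, d a = (∑ b : F, w (Sum.inl a) (Sum.inl b)) + ∑ v : T, w (Sum.inl a) (Sum.inr v) := by
    intro a
    rw [hd_def]
    exact Fintype.sum_sum_type _
  -- 1 - Q = D⁻¹ * Lff
  have hsub : (1 : Matrix F F ℝ) - Q = Matrix.diagonal (fun a => (d a)⁻¹) * Lff := by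
    ext a b
    rw [hLff]
    simp only [Matrix.sub_apply, Matrix.one_apply, hQ_def, Matrix.of_apply,
      Matrix.diagonal_mul, Matrix.diagonal_apply, mul_sub]
    rw [div_eq_mul_inv]
    by_cases h : a = b
    · subst h; simp [inv_mul_cancel₀ (hdne a)]; ring
    · simp [h]; ring
  have hMdet : IsUnit ((1 : Matrix F F ℝ) - Q).det := by
    rw [hsub, Matrix.det_mul, Matrix.det_diagonal]
    refine IsUnit.mul (isUnit_iff_ne_zero.2 ?_) hFF'
    exact Finset.prod_ne_zero_iff.2 fun a _ => inv_ne_zero (hdne a)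
  have hinvM : ((1 : Matrix F F ℝ) - Q)⁻¹ = Lff⁻¹ * Matrix.diagonal d := by
    apply Matrix.inv_eq_right_inv
    rw [hsub, Matrix.mul_assoc, ← Matrix.mul_assoc Lff, Matrix.mul_nonsing_inv _ hFF',
      Matrix.one_mul, Matrix.diagonal_mul_diagonal]
    rw [show (fun a => (d a)⁻¹ * d a) = fun _ => (1:ℝ) from funext fun a => inv_mul_cancel₀ (hdne a)]
    exact Matrix.diagonal_one
  -- nonnegativity and row bounds for Q, R
  have hQnn : ∀ a b : F, 0 ≤ Q a b := fun a b =>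
    div_nonneg (hnonneg _ _) (hd a).le
  have hRnn : ∀ (a : F) (v : T), 0 ≤ R a v := fun a v =>
    div_nonneg (hnonneg _ _) (hd a).le
  have hrowQ : ∀ a : F, ∑ b, Q a b ≤ 1 := by
    intro a
    have h1 : ∑ b, Q a b = (∑ b : F, w (Sum.inl a) (Sum.inl b)) / d a := by
      rw [Finset.sum_div]; rfl
    rw [h1, div_le_one (hd a), hdsplit a]
    have : 0 ≤ ∑ v : T, w (Sum.inl a) (Sum.inr v) :=
      Finset.sum_nonneg fun v _ => hnonneg _ _
    linarith
  have hQpow : ∀ (n : ℕ) (a b : F), 0 ≤ (Q ^ n) a b := fun n a b =>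
    matpow_entry_nonneg Q hQnn n a b
  have hQtend : ∀ a b : F, Tendsto (fun n => (Q ^ n) a b) atTop (𝓝 0) :=
    fun a b => pow_entries_tendsto_zero Q hQnn hrowQ hMdet a b
  -- geometric sum identity
  have hgeom : ∀ n : ℕ, (∑ ℓ ∈ Finset.range n, Q ^ ℓ) = (1 - Q)⁻¹ * (1 - Q ^ n) := by
    intro n
    have h1 : (1 - Q) * (∑ ℓ ∈ Finset.range n, Q ^ ℓ) = 1 - Q ^ n := by
      have h := mul_geom_sum Q n
      rw [← neg_sub Q 1, neg_mul, h, neg_sub]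
    calc (∑ ℓ ∈ Finset.range n, Q ^ ℓ)
        = ((1 - Q)⁻¹ * (1 - Q)) * (∑ ℓ ∈ Finset.range n, Q ^ ℓ) := by
          rw [Matrix.nonsing_inv_mul _ hMdet, Matrix.one_mul]
      _ = (1 - Q)⁻¹ * (1 - Q ^ n) := by rw [Matrix.mul_assoc, h1]
  -- the tsum computation
  have hts : ∀ v : T, ∑' ℓ : ℕ, (Q ^ ℓ * R) u v = ((1 - Q)⁻¹ * R) u v := by
    intro v
    have htnn : ∀ ℓ : ℕ, 0 ≤ (Q ^ ℓ * R) u v := by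
      intro ℓ
      rw [Matrix.mul_apply]
      exact Finset.sum_nonneg fun c _ => mul_nonneg (hQpow ℓ u c) (hRnn c v)
    have hpartial : ∀ n : ℕ, ∑ ℓ ∈ Finset.range n, (Q ^ ℓ * R) u v
        = ((1 - Q)⁻¹ * R) u v - ((1 - Q)⁻¹ * (Q ^ n * R)) u v := by
      intro n
      have h1 : ((∑ ℓ ∈ Finset.range n, Q ^ ℓ) * R) u v
          = ∑ ℓ ∈ Finset.range n, (Q ^ ℓ * R) u v := by
        rw [Matrix.sum_mul, Matrix.sum_apply]
      rw [← h1, hgeom n, Matrix.mul_assoc, Matrix.sub_mul, Matrix.one_mul,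
        Matrix.mul_sub, Matrix.sub_apply]
    have hterm : Tendsto (fun n => (((1 - Q)⁻¹ * (Q ^ n * R) : Matrix F T ℝ)) u v) atTop (𝓝 0) := by
      have heq : ∀ n : ℕ, (((1 - Q)⁻¹ * (Q ^ n * R) : Matrix F T ℝ)) u v
          = ∑ c, ∑ c', (1 - Q)⁻¹ u c * ((Q ^ n) c c' * R c' v) := by
        intro n
        rw [Matrix.mul_apply]
        refine Finset.sum_congr rfl fun c _ => ?_
        rw [Matrix.mul_apply, Finset.mul_sum]
      simp only [heq]
      have h0 : (0:ℝ) = ∑ c : F, ∑ c' : F, (0:ℝ) := by simp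
      rw [h0]
      refine tendsto_finset_sum _ fun c _ => ?_
      refine tendsto_finset_sum _ fun c' _ => ?_
      have := ((hQtend c c').mul_const (R c' v)).const_mul ((1 - Q)⁻¹ u c)
      simpa using this
    have hsum : Tendsto (fun n => ∑ ℓ ∈ Finset.range n, (Q ^ ℓ * R) u v) atTop
        (𝓝 (((1 - Q)⁻¹ * R) u v)) := by
      simp only [hpartial]
      have := hterm.const_sub (((1 - Q)⁻¹ * R) u v)
      simpa using this
    exact ((hasSum_iff_tendsto_nat_of_nonneg htnn _).2 hsum).tsum_eq
  -- identify (1-Q)⁻¹ * R with Lff⁻¹ * W_{FT}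
  have hWft : ((1 - Q)⁻¹ * R) = Lff⁻¹ * Matrix.of (fun (c : F) (v : T) => w (Sum.inl c) (Sum.inr v)) := by
    rw [hinvM, Matrix.mul_assoc]
    congr 1
    ext c v
    simp only [Matrix.diagonal_mul, hR_def, Matrix.of_apply]
    rw [mul_comm]
    exact div_mul_cancel₀ _ (hdne c)
  -- symmetry of Lff⁻¹
  have hLsymm : Lffᵀ = Lff := by
    ext a b
    rw [hLff]
    simp only [Matrix.transpose_apply, Matrix.sub_apply, Matrix.diagonal_apply, Matrix.of_apply]
    rw [hsymm (Sum.inl b) (Sum.inl a)]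
    by_cases h : a = b <;> simp [h, eq_comm]
  have hLinv_symm : ∀ a b : F, Lff⁻¹ a b = Lff⁻¹ b a := by
    intro a b
    have : (Lff⁻¹)ᵀ = Lff⁻¹ := by rw [Matrix.transpose_nonsing_inv, hLsymm]
    exact (congrFun (congrFun this b) a).symm ▸ rfl
  -- entrywise nonnegativity of Q^l * R
  have hQRnn : ∀ (ℓ : ℕ) (v : T), 0 ≤ (Q ^ ℓ * R) u v := by
    intro ℓ v
    rw [Matrix.mul_apply]
    exact Finset.sum_nonneg fun c _ => mul_nonneg (hQpow ℓ u c) (hRnn c v)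
  -- the left-hand side
  have hE : ∀ v : T,
      ((Matrix.fromCols (-(lapw.toBlocks₂₁ * Lff⁻¹)) 1)
        *ᵥ (Pi.single (Sum.inl u) 1 : F ⊕ T → ℝ)) v
      = ∑ c, Lff⁻¹ u c * w (Sum.inl c) (Sum.inr v) := by
    intro v
    have h1 : ∀ c : F, lapw.toBlocks₂₁ v c = -w (Sum.inr v) (Sum.inl c) := by
      intro c
      simp [hlapw, Matrix.toBlocks₂₁, Matrix.diagonal_apply]
    simp only [Matrix.mulVec_single_one, Matrix.col_apply, mul_one, Matrix.fromCols_apply_inl,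
      Matrix.neg_apply, Matrix.mul_apply, h1, neg_mul, Finset.sum_neg_distrib, neg_neg]
    refine Finset.sum_congr rfl fun c _ => ?_
    rw [hsymm (Sum.inr v) (Sum.inl c), hLinv_symm c u, mul_comm]
  have hmain : ∀ v : T,
      ((Matrix.fromCols (-(lapw.toBlocks₂₁ * Lff⁻¹)) 1)
        *ᵥ (Pi.single (Sum.inl u) 1 : F ⊕ T → ℝ)) v
      = ∑' ℓ : ℕ, (Q ^ ℓ * R) u v := by
    intro v
    rw [hE v, hts v, hWft, Matrix.mul_apply]
    simp only [Matrix.of_apply]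
  have hsum1 : (∑ v : T,
      ((Matrix.fromCols (-(lapw.toBlocks₂₁ * Lff⁻¹)) 1)
        *ᵥ (Pi.single (Sum.inl u) 1 : F ⊕ T → ℝ)) v) = 1 := by
    calc (∑ v : T, ((Matrix.fromCols (-(lapw.toBlocks₂₁ * Lff⁻¹)) 1)
        *ᵥ (Pi.single (Sum.inl u) 1 : F ⊕ T → ℝ)) v)
        = ∑ v : T, ∑ c, Lff⁻¹ u c * w (Sum.inl c) (Sum.inr v) :=
          Finset.sum_congr rfl fun v _ => hE v
      _ = ∑ c, ∑ v : T, Lff⁻¹ u c * w (Sum.inl c) (Sum.inr v) := Finset.sum_comm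
      _ = ∑ c, Lff⁻¹ u c * ∑ v : T, w (Sum.inl c) (Sum.inr v) := by
          simp [Finset.mul_sum]
      _ = ∑ c, Lff⁻¹ u c * ∑ b, Lff c b := by
          refine Finset.sum_congr rfl fun c _ => ?_
          congr 1
          have h2 : ∑ b, Lff c b = d c - ∑ b, w (Sum.inl c) (Sum.inl b) := by
            rw [hLff]
            simp [Matrix.sub_apply, Matrix.diagonal_apply, Finset.sum_sub_distrib,
              Finset.sum_ite_eq]
          rw [h2]
          have := hdsplit c
          linarith
      _ = ∑ b, ∑ c, Lff⁻¹ u c * Lff c b := by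
          rw [Finset.sum_comm]
          simp [Finset.mul_sum]
      _ = ∑ b, (Lff⁻¹ * Lff) u b := by
          simp [Matrix.mul_apply]
      _ = ∑ b, (1 : Matrix F F ℝ) u b := by rw [Matrix.nonsing_inv_mul _ hFF']
      _ = 1 := by simp [Matrix.one_apply]
  refine ⟨fun v => ?_, fun v => ?_, ?_⟩
  · show ((Matrix.fromCols (-(lapw.toBlocks₂₁ * Lff⁻¹)) 1)
        *ᵥ (Pi.single (Sum.inl u) 1 : F ⊕ T → ℝ)) v = ∑' ℓ : ℕ, (Q ^ ℓ * R) u v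
    exact hmain v
  · show 0 ≤ ((Matrix.fromCols (-(lapw.toBlocks₂₁ * Lff⁻¹)) 1)
        *ᵥ (Pi.single (Sum.inl u) 1 : F ⊕ T → ℝ)) v
    rw [hmain v]
    exact tsum_nonneg fun ℓ => hQRnn ℓ v
  · show (∑ v : T, ((Matrix.fromCols (-(lapw.toBlocks₂₁ * Lff⁻¹)) 1)
        *ᵥ (Pi.single (Sum.inl u) 1 : F ⊕ T → ℝ)) v) = 1
    exact hsum1
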